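/- Let M be a W*-bundle over a compact Hausdorff space K with conditional expectation E: M → C(K). Suppose X ⊆ T(M) is a weak*-closed convex set of traces with ‖a‖_{2,X} = ‖a‖_{2,K} for all a ∈ M, and suppose the C*-norm satisfies ‖a‖ ≤ 2^{1/2}‖a‖_{2,K} for all a ∈ M. If there exists a tracial state σ ∈ T(M) \ X, then X is not a face of T(M). -/

import Mathlib

open Filter

/-- The set of tracial states on a unital C*-algebra, viewed inside the weak* dual. -/
def tracialStates (A : Type*) [NormedRing A] [StarRing A] [NormedAlgebra ℂ A] :
    Set (WeakDual ℂ A) :=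
  {φ | φ 1 = 1 ∧ (∀ a : A, 0 ≤ (φ (star a * a)).re ∧ (φ (star a * a)).im = 0) ∧
    ∀ a b : A, φ (a * b) = φ (b * a)}

/-- The 2-seminorm `‖a‖_{2,X} = sup_{τ ∈ X} τ(a*a)^{1/2}` associated to a set of traces. -/
noncomputable def norm2 {A : Type*} [NormedRing A] [StarRing A] [NormedAlgebra ℂ A]
    (X : Set (WeakDual ℂ A)) (a : A) : ℝ :=
  sSup ((fun φ : WeakDual ℂ A => Real.sqrt (φ (star a * a)).re) '' X)

variable {K : Type*} [TopologicalSpace K] [CompactSpace K] [T2Space K]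
variable {M : Type*} [NormedRing M] [StarRing M] [CStarRing M] [NormedAlgebra ℂ M]
  [CompleteSpace M] [StarModule ℂ M]

/-- The uniform 2-norm `‖a‖_{2,K} = ‖E(a*a)‖^{1/2}` of a W*-bundle. -/
noncomputable def bundleNorm2 (E : M →L[ℂ] C(K, ℂ)) (a : M) : ℝ :=
  Real.sqrt ‖E (star a * a)‖

/-- `M` is a W*-bundle over `K` with central unital embedding `ι : C(K) → M` and faithful
tracial conditional expectation `E : M → C(K)`, whose C*-unit ball is complete for the
2-norm `‖a‖_{2,K} = ‖E(a*a)‖^{1/2}`. -/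
structure IsWStarBundle (ι : C(K, ℂ) →⋆ₐ[ℂ] M) (E : M →L[ℂ] C(K, ℂ)) : Prop where
  central : ∀ (f : C(K, ℂ)) (a : M), ι f * a = a * ι f
  tracial : ∀ a b : M, E (a * b) = E (b * a)
  expectation : ∀ f : C(K, ℂ), E (ι f) = f
  bimodule : ∀ (f : C(K, ℂ)) (a : M), E (ι f * a) = f * E a
  pos : ∀ (a : M) (x : K), 0 ≤ (E (star a * a) x).re ∧ (E (star a * a) x).im = 0
  faithful : ∀ a : M, E (star a * a) = 0 → a = 0
  complete : ∀ u : ℕ → M, (∀ n, ‖u n‖ ≤ 1) →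
    (∀ ε > 0, ∃ N, ∀ m ≥ N, ∀ n ≥ N, bundleNorm2 E (u m - u n) < ε) →
    ∃ a : M, ‖a‖ ≤ 1 ∧ Tendsto (fun n => bundleNorm2 E (u n - a)) atTop (nhds 0)


section Helpers

/-- Bundle the ambient typeclass data into a `CStarAlgebra` instance. -/
@[reducible]
noncomputable def auxCStarAlgebra : CStarAlgebra M :=
  { ‹NormedRing M›, ‹StarRing M›, ‹CStarRing M›, ‹NormedAlgebra ℂ M›, ‹CompleteSpace M›,
    ‹StarModule ℂ M› with }

lemma aux_smul_apply (φ : WeakDual ℂ M) (r : ℝ) (x : M) : φ (r • x) = r • φ x := by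
  rw [← algebraMap_smul ℂ r x, map_smul, algebraMap_smul]

/-- A tracial state takes real values, bounded by the norm, on self-adjoint elements. -/
lemma tracial_apply_selfAdjoint (φ : WeakDual ℂ M) (hφ : φ ∈ tracialStates M)
    {h : M} (hh : star h = h) : (φ h).im = 0 ∧ (φ h).re ≤ ‖h‖ := by
  letI : CStarAlgebra M := auxCStarAlgebra
  letI : PartialOrder M := CStarAlgebra.spectralOrder M
  letI : StarOrderedRing M := CStarAlgebra.spectralOrderedRing M
  have hsa : IsSelfAdjoint h := hh
  have hpos : 0 ≤ algebraMap ℝ M ‖h‖ - h := sub_nonneg.2 hsa.le_algebraMap_norm_self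
  have hc : star (CFC.sqrt (algebraMap ℝ M ‖h‖ - h)) * CFC.sqrt (algebraMap ℝ M ‖h‖ - h)
      = algebraMap ℝ M ‖h‖ - h := by
    rw [(IsSelfAdjoint.of_nonneg (CFC.sqrt_nonneg _) : IsSelfAdjoint _)]
    exact CFC.sqrt_mul_sqrt_self _ hpos
  obtain ⟨hre, him⟩ := hφ.2.1 (CFC.sqrt (algebraMap ℝ M ‖h‖ - h))
  rw [hc] at hre him
  have halg : φ (algebraMap ℝ M ‖h‖ - h) = (‖h‖ : ℂ) - φ h := by
    rw [map_sub]
    congr 1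
    rw [Algebra.algebraMap_eq_smul_one, aux_smul_apply, hφ.1]
    simp [Complex.real_smul]
  rw [halg] at hre him
  constructor
  · simpa using him
  · simp only [Complex.sub_re, Complex.ofReal_re] at hre
    linarith

/-- Tracial states are bounded (by `2`) as linear functionals. -/
lemma tracial_norm_bound (φ : WeakDual ℂ M) (hφ : φ ∈ tracialStates M) (a : M) :
    ‖φ a‖ ≤ 2 * ‖a‖ := by
  set h : M := (2:ℂ)⁻¹ • (a + star a) with hh_def
  set k : M := -((2:ℂ)⁻¹ • (Complex.I • (a - star a))) with hk_def
  have hstar2 : star ((2:ℂ)⁻¹) = (2:ℂ)⁻¹ := by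
    simp [Complex.star_def, map_inv₀]
  have hh : star h = h := by
    rw [hh_def, star_smul, hstar2, star_add, star_star]
    module
  have hk : star k = k := by
    rw [hk_def, star_neg, star_smul, hstar2, star_smul, star_sub, star_star,
      Complex.star_def, Complex.conj_I]
    module
  have hdecomp : a = h + Complex.I • k := by
    rw [hh_def, hk_def]
    have hI : (Complex.I * Complex.I : ℂ) = -1 := Complex.I_mul_I
    rw [smul_neg, smul_smul, smul_smul, mul_comm Complex.I ((2:ℂ)⁻¹), mul_assoc, hI]
    module
  have hsabound : ∀ x : M, star x = x → ‖φ x‖ ≤ ‖x‖ := by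
    intro x hx
    obtain ⟨him, hre⟩ := tracial_apply_selfAdjoint φ hφ hx
    have hxneg : star (-x) = -x := by rw [star_neg, hx]
    obtain ⟨_, hre'⟩ := tracial_apply_selfAdjoint φ hφ hxneg
    rw [map_neg] at hre'
    simp only [Complex.neg_re, norm_neg] at hre'
    have habs : |(φ x).re| ≤ ‖x‖ := abs_le.2 ⟨by linarith, hre⟩
    calc ‖φ x‖ ≤ |(φ x).re| + |(φ x).im| := Complex.norm_le_abs_re_add_abs_im _
      _ ≤ ‖x‖ := by rw [him]; simpa using habs
  have hnh : ‖h‖ ≤ ‖a‖ := by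
    rw [hh_def]
    calc ‖(2:ℂ)⁻¹ • (a + star a)‖ = ‖(2:ℂ)⁻¹‖ * ‖a + star a‖ := norm_smul _ _
      _ ≤ 2⁻¹ * (‖a‖ + ‖star a‖) := by
          gcongr
          · simp
          · exact norm_add_le _ _
      _ = ‖a‖ := by rw [norm_star]; ring
  have hnk : ‖k‖ ≤ ‖a‖ := by
    rw [hk_def, norm_neg]
    calc ‖(2:ℂ)⁻¹ • (Complex.I • (a - star a))‖
        = ‖(2:ℂ)⁻¹‖ * (‖Complex.I‖ * ‖a - star a‖) := by rw [norm_smul, norm_smul]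
      _ ≤ 2⁻¹ * (1 * (‖a‖ + ‖star a‖)) := by
          gcongr
          · simp
          · simp
          · exact norm_sub_le _ _
      _ = ‖a‖ := by rw [norm_star]; ring
  calc ‖φ a‖ = ‖φ h + Complex.I • φ k‖ := by
        rw [← map_smul, ← map_add, ← hdecomp]
    _ ≤ ‖φ h‖ + ‖Complex.I • φ k‖ := norm_add_le _ _
    _ = ‖φ h‖ + ‖φ k‖ := by rw [norm_smul]; simp
    _ ≤ ‖a‖ + ‖a‖ := add_le_add ((hsabound h hh).trans hnh) ((hsabound k hk).trans hnk)
    _ = 2 * ‖a‖ := by ring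

/-- The key inequality: `σ(s*s) ≤ 2 sup_{τ ∈ X} τ(s*s)`. -/
lemma key_ineq (E : M →L[ℂ] C(K, ℂ)) (X : Set (WeakDual ℂ M)) (hXsub : X ⊆ tracialStates M)
    (hXnorm : ∀ a : M, norm2 X a = bundleNorm2 E a)
    (hnorm : ∀ a : M, ‖a‖ ≤ Real.sqrt 2 * bundleNorm2 E a)
    (hXne : X.Nonempty) (σ : WeakDual ℂ M) (hσT : σ ∈ tracialStates M) (s : M) :
    (σ (star s * s)).re ≤ 2 * sSup ((fun τ : WeakDual ℂ M => (τ (star s * s)).re) '' X) := by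
  obtain ⟨τ₀, hτ₀⟩ := hXne
  have hb_sa : star (star s * s) = star s * s := by rw [star_mul, star_star]
  have hre_le : ∀ τ ∈ X, (τ (star s * s)).re ≤ ‖star s * s‖ :=
    fun τ hτ => (tracial_apply_selfAdjoint τ (hXsub hτ) hb_sa).2
  have hre_nonneg : ∀ τ ∈ X, 0 ≤ (τ (star s * s)).re := fun τ hτ => ((hXsub hτ).2.1 s).1
  set T := (fun τ : WeakDual ℂ M => (τ (star s * s)).re) '' X with hT_def
  have hTne : T.Nonempty := ⟨_, Set.mem_image_of_mem _ hτ₀⟩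
  have hTbdd : BddAbove T := ⟨‖star s * s‖, by rintro _ ⟨τ, hτ, rfl⟩; exact hre_le τ hτ⟩
  have hS_nonneg : 0 ≤ sSup T := by
    have h1 := le_csSup hTbdd (Set.mem_image_of_mem _ hτ₀)
    have h2 := hre_nonneg τ₀ hτ₀
    linarith
  have hmap : Real.sqrt (sSup T) = sSup (Real.sqrt '' T) :=
    Monotone.map_csSup_of_continuousAt Real.continuous_sqrt.continuousAt
      (fun x y hxy => Real.sqrt_le_sqrt hxy) hTne hTbdd
  have hnorm2 : norm2 X s = Real.sqrt (sSup T) := by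
    have himg : (fun φ : WeakDual ℂ M => Real.sqrt (φ (star s * s)).re) '' X
        = Real.sqrt '' T := by rw [hT_def, Set.image_image]
    rw [hmap, ← himg]
    rfl
  have h1 : ‖s‖ ≤ Real.sqrt 2 * Real.sqrt (sSup T) := by
    have := hnorm s
    rwa [← hXnorm s, hnorm2] at this
  have h2 : ‖star s * s‖ ≤ 2 * sSup T := by
    have hb_norm : ‖star s * s‖ = ‖s‖ * ‖s‖ := CStarRing.norm_star_mul_self
    have h3 : ‖s‖ * ‖s‖ ≤ (Real.sqrt 2 * Real.sqrt (sSup T)) * (Real.sqrt 2 * Real.sqrt (sSup T)) :=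
      mul_self_le_mul_self (norm_nonneg s) h1
    have h4 : (Real.sqrt 2 * Real.sqrt (sSup T)) * (Real.sqrt 2 * Real.sqrt (sSup T))
        = 2 * sSup T := by
      rw [mul_mul_mul_comm, Real.mul_self_sqrt (by norm_num), Real.mul_self_sqrt hS_nonneg]
    rw [hb_norm]
    linarith
  have h4 : (σ (star s * s)).re ≤ ‖star s * s‖ := (tracial_apply_selfAdjoint σ hσT hb_sa).2
  linarith

end Helpers

/-- Let `M` be a W*-bundle over `K`, and let `X ⊆ T(M)` be a weak*-closed convex set of
traces inducing the bundle 2-norm.  If the C*-norm satisfies `‖a‖ ≤ √2·‖a‖_{2,K}` and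
there is a trace `σ ∈ T(M) \ X`, then `X` is not a face of `T(M)`. -/
theorem not_face_of_missing_trace (ι : C(K, ℂ) →⋆ₐ[ℂ] M) (E : M →L[ℂ] C(K, ℂ))
    (hbundle : IsWStarBundle ι E)
    (X : Set (WeakDual ℂ M)) (hXsub : X ⊆ tracialStates M)
    (hXclosed : IsClosed X) (hXconv : Convex ℝ X)
    (hXnorm : ∀ a : M, norm2 X a = bundleNorm2 E a)
    (hnorm : ∀ a : M, ‖a‖ ≤ Real.sqrt 2 * bundleNorm2 E a)
    (σ : WeakDual ℂ M) (hσ : σ ∈ tracialStates M \ X) :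
    ¬ IsExtreme ℝ (tracialStates M) X := by
  classical
  intro hext
  obtain ⟨hσT, hσX⟩ := hσ
  rcases X.eq_empty_or_nonempty with hXe | hXne
  · -- `X` empty forces `M` to be trivial, contradicting `σ 1 = 1`.
    have hone : (1 : M) = 0 := by
      have h0 : bundleNorm2 E 1 = 0 := by
        rw [← hXnorm 1]
        simp [norm2, hXe]
      have h1 := hnorm 1
      rw [h0, mul_zero] at h1
      exact norm_le_zero_iff.mp h1
    have h2 : σ 1 = 0 := by rw [hone, map_zero]
    rw [hσT.1] at h2
    exact one_ne_zero h2
  by_cases hcase : ∃ τ ∈ X, ∀ s : M, (σ (star s * s)).re ≤ 2 * (τ (star s * s)).re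
  · -- `σ` is dominated by `2τ`: then `τ` is the midpoint of `σ` and `2τ - σ`.
    obtain ⟨τ, hτX, hdom⟩ := hcase
    set ρ : WeakDual ℂ M := (2:ℝ) • τ - σ with hρ_def
    have hρapp : ∀ x : M, ρ x = (2:ℝ) • τ x - σ x := fun x => rfl
    have hτT := hXsub hτX
    have hρT : ρ ∈ tracialStates M := by
      refine ⟨?_, ?_, ?_⟩
      · rw [hρapp, hτT.1, hσT.1]
        simp [Complex.real_smul]
        norm_num
      · intro a
        have h1 := hτT.2.1 a
        have h2 := hσT.2.1 a
        have h3 := hdom a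
        rw [hρapp]
        constructor
        · simp only [Complex.sub_re, Complex.smul_re, smul_eq_mul]
          linarith
        · simp only [Complex.sub_im, Complex.smul_im, h1.2, h2.2, smul_eq_mul]
          ring
      · intro a b
        rw [hρapp, hρapp, hτT.2.2 a b, hσT.2.2 a b]
    have hseg : τ ∈ openSegment ℝ σ ρ := by
      refine ⟨1/2, 1/2, by norm_num, by norm_num, by norm_num, ?_⟩
      refine DFunLike.ext _ _ fun x => ?_
      show ((1/2:ℝ) • σ x + (1/2:ℝ) • ((2:ℝ) • τ x - σ x)) = τ x
      simp only [Complex.real_smul]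
      push_cast
      ring
    exact hσX (hext.2 hσT hρT hτX hseg)
  · push_neg at hcase
    -- `X` is weak*-compact.
    have hXcomp : IsCompact X := by
      refine IsCompact.of_isClosed_subset (WeakDual.isCompact_closedBall 0 2) hXclosed ?_
      intro τ hτ
      simp only [Set.mem_preimage, Metric.mem_closedBall, dist_zero_right]
      exact ContinuousLinearMap.opNorm_le_bound _ (by norm_num)
        (tracial_norm_bound τ (hXsub hτ))
    set U : M → Set (WeakDual ℂ M) :=
      fun s => {φ : WeakDual ℂ M | 2 * (φ (star s * s)).re < (σ (star s * s)).re} with hU_def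
    have hUopen : ∀ s, IsOpen (U s) := fun s =>
      isOpen_lt (continuous_const.mul (Complex.continuous_re.comp
        (WeakDual.eval_continuous _))) continuous_const
    have hcover : X ⊆ ⋃ s, U s := by
      intro τ hτ
      obtain ⟨s, hs⟩ := hcase τ hτ
      exact Set.mem_iUnion.2 ⟨s, hs⟩
    obtain ⟨t, ht⟩ := hXcomp.elim_finite_subcover U hUopen hcover
    -- Move to a finite-dimensional picture.
    set g : WeakDual ℂ M → (↥t → ℝ) :=
      fun φ i => 2 * (φ (star (i : M) * (i : M))).re - (σ (star (i : M) * (i : M))).re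
      with hg_def
    have hgcont : Continuous g := by
      refine continuous_pi fun i => Continuous.sub ?_ continuous_const
      exact continuous_const.mul (Complex.continuous_re.comp (WeakDual.eval_continuous _))
    set D := g '' X with hD_def
    have hDcomp : IsCompact D := hXcomp.image hgcont
    have hDconv : Convex ℝ D := by
      rintro y₁ ⟨φ, hφ, rfl⟩ y₂ ⟨ψ, hψ, rfl⟩ p q hp hq hpq
      refine ⟨p • φ + q • ψ, hXconv hφ hψ hp hq hpq, ?_⟩
      funext i
      have happ : ∀ x : M, (p • φ + q • ψ) x = p • φ x + q • ψ x := fun x => rfl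
      simp only [hg_def, Pi.add_apply, Pi.smul_apply, smul_eq_mul, happ, Complex.add_re,
        Complex.smul_re]
      linear_combination (σ (star (i : M) * (i : M))).re * hpq
    set Q : Set (↥t → ℝ) := {y | ∀ i, 0 ≤ y i} with hQ_def
    have hQconv : Convex ℝ Q := by
      intro y hy z hz p q hp hq _
      intro i
      simp only [Pi.add_apply, Pi.smul_apply, smul_eq_mul]
      exact add_nonneg (mul_nonneg hp (hy i)) (mul_nonneg hq (hz i))
    have hQclosed : IsClosed Q := by
      have hQeq : Q = ⋂ i, {y : ↥t → ℝ | 0 ≤ y i} := by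
        ext y
        simp [hQ_def, Set.mem_iInter]
      rw [hQeq]
      exact isClosed_iInter fun i => isClosed_le continuous_const (continuous_apply i)
    have hdisj : Disjoint D Q := by
      rw [Set.disjoint_left]
      rintro y ⟨φ, hφ, rfl⟩ hyQ
      obtain ⟨i, hit, hiU⟩ := Set.mem_iUnion₂.1 (ht hφ)
      have hlt : 2 * (φ (star i * i)).re < (σ (star i * i)).re := hiU
      have h0 : (0:ℝ) ≤ 2 * (φ (star i * i)).re - (σ (star i * i)).re := hyQ ⟨i, hit⟩
      linarith
    obtain ⟨f, u, v, hfD, huv, hfQ⟩ :=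
      geometric_hahn_banach_compact_closed hDconv hDcomp hQconv hQclosed hdisj
    have hv0 : v < 0 := by
      have h0Q : (0 : ↥t → ℝ) ∈ Q := fun i => le_rfl
      have := hfQ 0 h0Q
      simpa using this
    have hu0 : u < 0 := lt_trans huv hv0
    set c : ↥t → ℝ := fun i => f (Pi.single i 1) with hc_def
    have hc_nonneg : ∀ i, 0 ≤ c i := by
      intro i
      by_contra hneg
      push_neg at hneg
      have hvc : 0 ≤ v / c i := le_of_lt (div_pos_of_neg_of_neg hv0 hneg)
      have hmem : (v / c i) • (Pi.single i (1:ℝ) : ↥t → ℝ) ∈ Q := by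
        intro j
        simp only [Pi.smul_apply, smul_eq_mul]
        by_cases hj : j = i
        · subst hj
          rw [Pi.single_eq_same]
          linarith
        · rw [Pi.single_eq_of_ne hj]
          simp
      have hcontr := hfQ _ hmem
      rw [map_smul, smul_eq_mul] at hcontr
      have hci : f (Pi.single i (1:ℝ)) = c i := rfl
      rw [hci, div_mul_cancel₀ v (ne_of_lt hneg)] at hcontr
      exact lt_irrefl v hcontr
    have hf_eq : ∀ y : ↥t → ℝ, f y = ∑ i, y i * c i := by
      intro y
      have hy : y = ∑ i, Pi.single i (y i) := (Finset.univ_sum_single y).symm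
      conv_lhs => rw [hy]
      rw [map_sum]
      refine Finset.sum_congr rfl fun i _ => ?_
      have hsingle : Pi.single i (y i) = y i • (Pi.single i (1:ℝ) : ↥t → ℝ) := by
        rw [← Pi.single_smul, smul_eq_mul, mul_one]
      rw [hsingle, map_smul, smul_eq_mul]
    -- The combined positive element.
    set d : ↥t → M := fun i => Real.sqrt (c i) • (i : M) with hd_def
    set a : M := ∑ i, star (d i) * d i with ha_def
    have hdb : ∀ i : ↥t, star (d i) * d i = c i • (star (i : M) * (i : M)) := by
      intro i
      simp only [hd_def]
      rw [star_smul, star_trivial, smul_mul_assoc, mul_smul_comm, smul_smul,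
        Real.mul_self_sqrt (hc_nonneg i)]
    have happ_re : ∀ φ : WeakDual ℂ M,
        (φ a).re = ∑ i, c i * (φ (star (i : M) * (i : M))).re := by
      intro φ
      rw [ha_def, map_sum, Complex.re_sum]
      refine Finset.sum_congr rfl fun i _ => ?_
      rw [hdb i, aux_smul_apply, Complex.smul_re, smul_eq_mul]
    have hkey3 : ∀ τ ∈ X, 2 * (τ a).re - (σ a).re < u := by
      intro τ hτ
      have hfg := hfD (g τ) ⟨τ, hτ, rfl⟩
      rw [hf_eq] at hfg
      have hsum : ∑ i, g τ i * c i = 2 * (τ a).re - (σ a).re := by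
        rw [happ_re τ, happ_re σ, Finset.mul_sum, ← Finset.sum_sub_distrib]
        refine Finset.sum_congr rfl fun i _ => ?_
        simp only [hg_def]
        ring
      rwa [hsum] at hfg
    letI : CStarAlgebra M := auxCStarAlgebra
    letI : PartialOrder M := CStarAlgebra.spectralOrder M
    letI : StarOrderedRing M := CStarAlgebra.spectralOrderedRing M
    have ha_pos : 0 ≤ a := by
      rw [ha_def]
      exact Finset.sum_nonneg fun i _ => star_mul_self_nonneg (d i)
    have hss : star (CFC.sqrt a) * CFC.sqrt a = a := by
      rw [(IsSelfAdjoint.of_nonneg (CFC.sqrt_nonneg _) : IsSelfAdjoint _)]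
      exact CFC.sqrt_mul_sqrt_self a ha_pos
    have hkeyA := key_ineq E X hXsub hXnorm hnorm hXne σ hσT (CFC.sqrt a)
    rw [hss] at hkeyA
    have hbound : sSup ((fun τ : WeakDual ℂ M => (τ a).re) '' X) ≤ ((σ a).re + u) / 2 := by
      refine csSup_le (hXne.image _) ?_
      rintro _ ⟨τ, hτ, rfl⟩
      have := hkey3 τ hτ
      linarith
    linarith
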